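/- arXiv:2011.10939 — 2 statements merged into one kernel-verified Lean document; each statement's English description precedes it below -/
import Mathlib

section
/- For a cycle C_n of length n, the quantity f_{C_n} (the alternating sum of (-1)^{|A|} over independent sets A) satisfies |f_{C_n}| = 2 if 3 divides n, and |f_{C_n}| = 1 otherwise. -/
open Finset


def pSum (m : ℕ) : ℤ :=
  ∑ A ∈ (range m).powerset.filter (fun A => ∀ i ∈ A, i + 1 ∉ A), (-1 : ℤ) ^ A.card

lemma pSum_shift (a m : ℕ) :
    ∑ A ∈ ((Ico a (a + m)).powerset.filter (fun A => ∀ i ∈ A, i + 1 ∉ A)),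
      (-1 : ℤ) ^ A.card = pSum m := by
  unfold pSum
  refine Finset.sum_nbij' (fun A => A.image (· - a)) (fun B => B.image (· + a)) ?_ ?_ ?_ ?_ ?_
  · intro A hA
    simp only [mem_filter, mem_powerset] at hA ⊢
    obtain ⟨hsub, hok⟩ := hA
    have hb : ∀ x ∈ A, a ≤ x ∧ x < a + m := fun x hx => mem_Ico.mp (hsub hx)
    constructor
    · intro y hy
      simp only [mem_image] at hy
      obtain ⟨x, hx, rfl⟩ := hy
      have := hb x hx
      simp only [mem_range]; omega
    · intro i hi hi1
      simp only [mem_image] at hi hi1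
      obtain ⟨x, hx, hxe⟩ := hi
      obtain ⟨y, hy, hye⟩ := hi1
      have h1 := hb x hx
      have h2 := hb y hy
      have : y = x + 1 := by omega
      exact hok x hx (this ▸ hy)
  · intro B hB
    simp only [mem_filter, mem_powerset] at hB ⊢
    obtain ⟨hsub, hok⟩ := hB
    have hb : ∀ x ∈ B, x < m := fun x hx => mem_range.mp (hsub hx)
    constructor
    · intro y hy
      simp only [mem_image] at hy
      obtain ⟨x, hx, rfl⟩ := hy
      have := hb x hx
      simp only [mem_Ico]; omega
    · intro i hi hi1
      simp only [mem_image] at hi hi1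
      obtain ⟨x, hx, hxe⟩ := hi
      obtain ⟨y, hy, hye⟩ := hi1
      have : y = x + 1 := by omega
      exact hok x hx (this ▸ hy)
  · intro A hA
    simp only [mem_filter, mem_powerset] at hA
    have hb : ∀ x ∈ A, a ≤ x := fun x hx => (mem_Ico.mp (hA.1 hx)).1
    show Finset.image _ (Finset.image _ _) = _
    rw [Finset.image_image]
    rw [show ((· + a) ∘ (· - a)) = fun x : ℕ => x - a + a from rfl]
    rw [Finset.image_congr (g := id) (fun x hx => by have := hb x hx; simp; omega),
      Finset.image_id]
  · intro B hB
    show Finset.image _ (Finset.image _ _) = _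
    rw [Finset.image_image]
    rw [show ((· - a) ∘ (· + a)) = fun x : ℕ => x + a - a from rfl]
    rw [Finset.image_congr (g := id) (fun x hx => by simp), Finset.image_id]
  · intro A hA
    simp only [mem_filter, mem_powerset] at hA
    have hb : ∀ x ∈ A, a ≤ x := fun x hx => (mem_Ico.mp (hA.1 hx)).1
    rw [Finset.card_image_of_injOn (fun x hx y hy h => by
      have := hb x hx; have := hb y hy; omega)]


lemma pSum_zero : pSum 0 = 1 := by decide
lemma pSum_one : pSum 1 = 0 := by decide

lemma pSum_rec (m : ℕ) : pSum (m + 2) = pSum (m + 1) - pSum m := by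
  unfold pSum
  rw [← Finset.sum_filter_add_sum_filter_not
    ((range (m+2)).powerset.filter (fun A => ∀ i ∈ A, i + 1 ∉ A)) (fun A => m + 1 ∈ A)]
  rw [Finset.filter_filter, Finset.filter_filter]
  have h1 : filter (fun A => (∀ i ∈ A, i + 1 ∉ A) ∧ ¬ m + 1 ∈ A) (range (m+2)).powerset
      = filter (fun A => ∀ i ∈ A, i + 1 ∉ A) (range (m+1)).powerset := by
    ext A
    simp only [mem_filter, mem_powerset, Finset.subset_iff, mem_range]
    constructor
    · rintro ⟨hsub, hok, hnm⟩
      exact ⟨fun x hx => by have := hsub hx; rcases Nat.lt_succ_iff_lt_or_eq.mp this with h | h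
                            · exact h
                            · exact absurd (h ▸ hx) hnm, hok⟩
    · rintro ⟨hsub, hok⟩
      exact ⟨fun x hx => Nat.lt_succ_of_lt (hsub hx), hok,
        fun hm => by have := hsub hm; omega⟩
  have h2 : ∑ A ∈ filter (fun A => (∀ i ∈ A, i + 1 ∉ A) ∧ m + 1 ∈ A) (range (m+2)).powerset,
      (-1 : ℤ) ^ A.card
      = - ∑ A ∈ (range m).powerset.filter (fun A => ∀ i ∈ A, i + 1 ∉ A), (-1 : ℤ) ^ A.card := by
    rw [← Finset.sum_neg_distrib]
    refine Finset.sum_nbij' (fun A => A.erase (m+1)) (fun B => insert (m+1) B) ?_ ?_ ?_ ?_ ?_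
    · intro A hA
      simp only [mem_filter, mem_powerset] at hA ⊢
      obtain ⟨hsub, hok, hm⟩ := hA
      refine ⟨fun x hx => ?_, fun i hi h => hok i (Finset.mem_of_mem_erase hi) (Finset.mem_of_mem_erase h)⟩
      have hne := Finset.ne_of_mem_erase hx
      have hxA := Finset.mem_of_mem_erase hx
      have hlt := mem_range.mp (hsub hxA)
      have hxm : x ≠ m := fun h => hok m (h ▸ hxA) hm
      exact mem_range.mpr (by omega)
    · intro B hB
      simp only [mem_filter, mem_powerset] at hB ⊢
      obtain ⟨hsub, hok⟩ := hB
      have hb : ∀ x ∈ B, x < m := fun x hx => mem_range.mp (hsub hx)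
      refine ⟨fun x hx => ?_, fun i hi hi1 => ?_, Finset.mem_insert_self _ _⟩
      · rcases Finset.mem_insert.mp hx with h | h
        · exact mem_range.mpr (by omega)
        · exact mem_range.mpr (by have := hb x h; omega)
      · rcases Finset.mem_insert.mp hi with h | h
        · rcases Finset.mem_insert.mp hi1 with h' | h'
          · omega
          · have := hb _ h'; omega
        · rcases Finset.mem_insert.mp hi1 with h' | h'
          · have := hb _ h; omega
          · exact hok i h h'
    · intro A hA
      simp only [mem_filter, mem_powerset] at hA
      exact Finset.insert_erase hA.2.2
    · intro B hB
      simp only [mem_filter, mem_powerset] at hB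
      have : m + 1 ∉ B := fun h => by have := mem_range.mp (hB.1 h); omega
      exact Finset.erase_insert this
    · intro A hA
      simp only [mem_filter, mem_powerset] at hA
      have : 1 ≤ A.card := Finset.card_pos.mpr ⟨m+1, hA.2.2⟩
      obtain ⟨c, hc⟩ : ∃ c, A.card = c + 1 := ⟨A.card - 1, by omega⟩
      rw [Finset.card_erase_of_mem hA.2.2, hc, pow_succ]
      simp
  rw [h1, h2]
  ring

def qv (m : ℕ) : ℤ :=
  if m % 6 = 0 then 1 else if m % 6 = 1 then 0 else if m % 6 = 2 then -1
  else if m % 6 = 3 then -1 else if m % 6 = 4 then 0 else 1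

lemma pSum_eq_qv (m : ℕ) : pSum m = qv m := by
  induction m using Nat.strong_induction_on with
  | _ m ih =>
    match m with
    | 0 => simpa [qv] using pSum_zero
    | 1 => simpa [qv] using pSum_one
    | (k + 2) =>
      rw [pSum_rec, ih (k+1) (by omega), ih k (by omega)]
      unfold qv
      have h6 : k % 6 = 0 ∨ k % 6 = 1 ∨ k % 6 = 2 ∨ k % 6 = 3 ∨ k % 6 = 4 ∨ k % 6 = 5 := by
        omega
      rcases h6 with h | h | h | h | h | h <;>
        · rw [show (k+1) % 6 = (k % 6 + 1) % 6 from by omega,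
            show (k+2) % 6 = (k % 6 + 2) % 6 from by omega, h]
          norm_num


/-- `fG G = Σ (-1)^{|A|}` over all independent sets `A` of `G` (including `∅`). -/
def fG {V : Type*} [Fintype V] [DecidableEq V] (G : SimpleGraph V) [DecidableRel G.Adj] : ℤ :=
  ∑ A ∈ univ.powerset.filter (fun A => ∀ u ∈ A, ∀ w ∈ A, ¬ G.Adj u w), (-1 : ℤ) ^ A.card

lemma mod_key {n : ℕ} (hn : 3 ≤ n) (a b : ℕ) (ha : a < n) (hb : b < n) :
    (n - b + a) % n = 1 ↔ (a = b + 1 ∨ (b = n - 1 ∧ a = 0)) := by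
  rcases lt_or_ge (n - b + a) n with h | h
  · rw [Nat.mod_eq_of_lt h]; omega
  · rw [Nat.mod_eq_sub_mod h, Nat.mod_eq_of_lt (by omega)]; omega

lemma cyc_adj {n : ℕ} (hn : 3 ≤ n) (u v : Fin n) :
    (SimpleGraph.cycleGraph n).Adj u v ↔
      (u.val + 1 = v.val ∨ v.val + 1 = u.val ∨ (u.val = 0 ∧ v.val = n - 1) ∨
        (v.val = 0 ∧ u.val = n - 1)) := by
  rw [SimpleGraph.cycleGraph_adj']
  have hu := u.isLt
  have hv := v.isLt
  rw [Fin.sub_def, Fin.sub_def]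
  simp only
  rw [mod_key hn _ _ hu hv, mod_key hn _ _ hv hu]
  omega

def cval (n : ℕ) : ℤ :=
  ∑ B ∈ (range n).powerset.filter
      (fun B => (∀ i ∈ B, i + 1 ∉ B) ∧ ¬(0 ∈ B ∧ n - 1 ∈ B)), (-1 : ℤ) ^ B.card

lemma fG_cycle_eq_cval (n : ℕ) (hn : 3 ≤ n) : fG (SimpleGraph.cycleGraph n) = cval n := by
  unfold fG cval
  refine Finset.sum_nbij' (fun A => A.image Fin.val)
    (fun B => univ.filter (fun v : Fin n => v.val ∈ B)) ?_ ?_ ?_ ?_ ?_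
  · intro A hA
    simp only [mem_filter, mem_powerset] at hA ⊢
    obtain ⟨-, hok⟩ := hA
    refine ⟨fun y hy => ?_, fun i hi hi1 => ?_, fun ⟨h0, h1⟩ => ?_⟩
    · simp only [mem_image] at hy
      obtain ⟨x, hx, rfl⟩ := hy
      exact mem_range.mpr x.isLt
    · simp only [mem_image] at hi hi1
      obtain ⟨x, hx, hxe⟩ := hi
      obtain ⟨y, hy, hye⟩ := hi1
      exact hok x hx y hy ((cyc_adj hn x y).mpr (Or.inl (by omega)))
    · simp only [mem_image] at h0 h1
      obtain ⟨x, hx, hxe⟩ := h0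
      obtain ⟨y, hy, hye⟩ := h1
      exact hok x hx y hy ((cyc_adj hn x y).mpr (Or.inr (Or.inr (Or.inl ⟨hxe, hye⟩))))
  · intro B hB
    simp only [mem_filter, mem_powerset, mem_range] at hB ⊢
    obtain ⟨hsub, hok, h01⟩ := hB
    refine ⟨Finset.filter_subset _ _, fun u hu w hw hadj => ?_⟩
    simp only [mem_filter, mem_univ, true_and] at hu hw
    rcases (cyc_adj hn u w).mp hadj with h | h | h | h
    · exact hok u.val hu (h ▸ hw)
    · exact hok w.val hw (h ▸ hu)
    · exact h01 ⟨h.1 ▸ hu, h.2 ▸ hw⟩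
    · exact h01 ⟨h.1 ▸ hw, h.2 ▸ hu⟩
  · intro A hA
    ext v
    simp only [mem_filter, mem_univ, true_and, mem_image]
    constructor
    · rintro ⟨x, hx, hxe⟩
      rwa [show v = x from Fin.ext hxe.symm]
    · intro hv; exact ⟨v, hv, rfl⟩
  · intro B hB
    simp only [mem_filter, mem_powerset] at hB
    have hsub := hB.1
    ext i
    simp only [mem_image, mem_filter, mem_univ, true_and]
    constructor
    · rintro ⟨x, hx, rfl⟩; exact hx
    · intro hi
      have hilt : i < n := mem_range.mp (hsub hi)
      exact ⟨⟨i, hilt⟩, hi, rfl⟩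
  · intro A hA
    rw [Finset.card_image_of_injOn (Function.Injective.injOn Fin.val_injective)]

lemma cval_eq (n : ℕ) (hn : 3 ≤ n) : cval n = pSum (n - 1) - pSum (n - 3) := by
  unfold cval
  rw [← Finset.sum_filter_add_sum_filter_not
    ((range n).powerset.filter (fun B => (∀ i ∈ B, i + 1 ∉ B) ∧ ¬(0 ∈ B ∧ n - 1 ∈ B)))
    (fun B => 0 ∈ B)]
  rw [Finset.filter_filter, Finset.filter_filter]
  have h1 : ∑ B ∈ filter (fun B => ((∀ i ∈ B, i + 1 ∉ B) ∧ ¬(0 ∈ B ∧ n - 1 ∈ B)) ∧ ¬ 0 ∈ B)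
      (range n).powerset, (-1 : ℤ) ^ B.card = pSum (n - 1) := by
    rw [← pSum_shift 1 (n-1)]
    congr 1
    rw [show 1 + (n - 1) = n from by omega]
    ext B
    simp only [mem_filter, mem_powerset, Finset.subset_iff, mem_range, mem_Ico]
    constructor
    · rintro ⟨hsub, ⟨hok, -⟩, h0⟩
      exact ⟨fun x hx => ⟨Nat.pos_of_ne_zero (fun h => h0 (h ▸ hx)), hsub hx⟩, hok⟩
    · rintro ⟨hsub, hok⟩
      have h0 : 0 ∉ B := fun h => by have := (hsub h).1; omega
      exact ⟨fun x hx => (hsub hx).2, ⟨hok, fun h => h0 h.1⟩, h0⟩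
  have h2 : ∑ B ∈ filter (fun B => ((∀ i ∈ B, i + 1 ∉ B) ∧ ¬(0 ∈ B ∧ n - 1 ∈ B)) ∧ 0 ∈ B)
      (range n).powerset, (-1 : ℤ) ^ B.card
      = - ∑ A ∈ ((Ico 2 (2 + (n - 3))).powerset.filter (fun A => ∀ i ∈ A, i + 1 ∉ A)),
          (-1 : ℤ) ^ A.card := by
    rw [← Finset.sum_neg_distrib]
    have hIco : 2 + (n - 3) = n - 1 := by omega
    refine Finset.sum_nbij' (fun B => B.erase 0) (fun C => insert 0 C) ?_ ?_ ?_ ?_ ?_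
    · intro B hB
      simp only [mem_filter, mem_powerset] at hB ⊢
      obtain ⟨hsub, ⟨hok, h01⟩, h0⟩ := hB
      have h1B : 1 ∉ B := hok 0 h0
      have hn1 : n - 1 ∉ B := fun h => h01 ⟨h0, h⟩
      refine ⟨fun x hx => ?_, fun i hi h => hok i (Finset.mem_of_mem_erase hi)
        (Finset.mem_of_mem_erase h)⟩
      have hne := Finset.ne_of_mem_erase hx
      have hxB := Finset.mem_of_mem_erase hx
      have hlt := mem_range.mp (hsub hxB)
      have hx1 : x ≠ 1 := fun h => h1B (h ▸ hxB)
      have hxn1 : x ≠ n - 1 := fun h => hn1 (h ▸ hxB)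
      exact mem_Ico.mpr (by omega)
    · intro C hC
      simp only [mem_filter, mem_powerset] at hC ⊢
      obtain ⟨hsub, hok⟩ := hC
      have hb : ∀ x ∈ C, 2 ≤ x ∧ x < 2 + (n - 3) := fun x hx => mem_Ico.mp (hsub hx)
      refine ⟨fun x hx => ?_, ⟨fun i hi h => ?_, fun hcon => ?_⟩, Finset.mem_insert_self _ _⟩
      · rcases Finset.mem_insert.mp hx with h | h
        · exact mem_range.mpr (by omega)
        · exact mem_range.mpr (by have := hb x h; omega)
      · rcases Finset.mem_insert.mp hi with h0 | hC1
        · subst h0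
          rcases Finset.mem_insert.mp h with h' | h'
          · omega
          · have := hb _ h'; omega
        · rcases Finset.mem_insert.mp h with h' | h'
          · have := hb _ hC1; omega
          · exact hok i hC1 h'
      · rcases Finset.mem_insert.mp hcon.2 with h | h
        · omega
        · have := hb _ h; omega
    · intro B hB
      simp only [mem_filter, mem_powerset] at hB
      exact Finset.insert_erase hB.2.2
    · intro C hC
      simp only [mem_filter, mem_powerset] at hC
      have : 0 ∉ C := fun h => by have := mem_Ico.mp (hC.1 h); omega
      exact Finset.erase_insert this
    · intro B hB
      simp only [mem_filter, mem_powerset] at hB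
      have : 1 ≤ B.card := Finset.card_pos.mpr ⟨0, hB.2.2⟩
      obtain ⟨c, hc⟩ : ∃ c, B.card = c + 1 := ⟨B.card - 1, by omega⟩
      rw [Finset.card_erase_of_mem hB.2.2, hc, pow_succ]
      simp
  rw [h1, h2, pSum_shift]
  ring

/-- For the cycle `C_n` (`n ≥ 3`), `|f_{C_n}| = 2` if `3 ∣ n` and `|f_{C_n}| = 1` otherwise. -/
theorem abs_fG_cycleGraph (n : ℕ) (hn : 3 ≤ n) :
    |fG (SimpleGraph.cycleGraph n)| = if 3 ∣ n then 2 else 1 := by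
  rw [fG_cycle_eq_cval n hn, cval_eq n hn, pSum_eq_qv, pSum_eq_qv]
  have h6 : n % 6 = 0 ∨ n % 6 = 1 ∨ n % 6 = 2 ∨ n % 6 = 3 ∨ n % 6 = 4 ∨ n % 6 = 5 := by omega
  rcases h6 with h | h | h | h | h | h
  · rw [if_pos (show 3 ∣ n from by omega)]
    unfold qv
    rw [show (n - 1) % 6 = 5 from by omega, show (n - 3) % 6 = 3 from by omega]
    norm_num
  · rw [if_neg (show ¬ 3 ∣ n from by omega)]
    unfold qv
    rw [show (n - 1) % 6 = 0 from by omega, show (n - 3) % 6 = 4 from by omega]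
    norm_num
  · rw [if_neg (show ¬ 3 ∣ n from by omega)]
    unfold qv
    rw [show (n - 1) % 6 = 1 from by omega, show (n - 3) % 6 = 5 from by omega]
    norm_num
  · rw [if_pos (show 3 ∣ n from by omega)]
    unfold qv
    rw [show (n - 1) % 6 = 2 from by omega, show (n - 3) % 6 = 0 from by omega]
    norm_num
  · rw [if_neg (show ¬ 3 ∣ n from by omega)]
    unfold qv
    rw [show (n - 1) % 6 = 3 from by omega, show (n - 3) % 6 = 1 from by omega]
    norm_num
  · rw [if_neg (show ¬ 3 ∣ n from by omega)]
    unfold qv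
    rw [show (n - 1) % 6 = 4 from by omega, show (n - 3) % 6 = 2 from by omega]
    norm_num
end

section
/- Let G be a finite graph whose vertex set is partitioned into three nonempty sets C_0, C_1, C_2, each of which is an independent set in G, such that every edge of G joins C_i to C_{i+1 mod 3} for some i, and every vertex of C_i has a neighbor in C_{i+1 mod 3}. Then G contains an induced cycle whose length is divisible by 3. -/
open Finset

/-- If `V(G)` is partitioned into three nonempty independent sets `C 0, C 1, C 2` such that
every edge joins some `C i` to `C (i+1)` and every vertex of `C i` has a neighbor in
`C (i+1)` (indices mod 3), then `G` contains an induced cycle of length divisible by 3. -/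
theorem induced_cycle_of_three_layer_partition {V : Type*} [Fintype V] [DecidableEq V]
    (G : SimpleGraph V) (C : ZMod 3 → Finset V)
    (hne : ∀ i, (C i).Nonempty)
    (hdisj : ∀ i j, i ≠ j → Disjoint (C i) (C j))
    (hcover : ∀ v : V, ∃ i, v ∈ C i)
    (hindep : ∀ i, ∀ u ∈ C i, ∀ w ∈ C i, ¬ G.Adj u w)
    (hedges : ∀ u w : V, G.Adj u w →
      ∃ i, (u ∈ C i ∧ w ∈ C (i + 1)) ∨ (w ∈ C i ∧ u ∈ C (i + 1)))
    (hout : ∀ i, ∀ u ∈ C i, ∃ w ∈ C (i + 1), G.Adj u w) :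
    ∃ n : ℕ, 3 ∣ n ∧ 3 ≤ n ∧ ∃ f : ZMod n → V, Function.Injective f ∧
      ∀ i j : ZMod n, G.Adj (f i) (f j) ↔ (j = i + 1 ∨ i = j + 1) := by
  classical
  -- the layer function
  choose ℓ hℓ using hcover
  have hℓ_eq : ∀ (v : V) (i : ZMod 3), v ∈ C i → ℓ v = i := by
    intro v i hv
    by_contra h
    exact (Finset.disjoint_left.mp (hdisj _ _ h) (hℓ v)) hv
  -- the directed relation: an edge going one layer up
  set R : V → V → Prop := fun u w => G.Adj u w ∧ ℓ w = ℓ u + 1 with hRdef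
  have hR_or : ∀ u w, G.Adj u w → R u w ∨ R w u := by
    intro u w hadj
    obtain ⟨i, h | h⟩ := hedges u w hadj
    · exact Or.inl ⟨hadj, by rw [hℓ_eq w _ h.2, hℓ_eq u _ h.1]⟩
    · exact Or.inr ⟨hadj.symm, by rw [hℓ_eq u _ h.2, hℓ_eq w _ h.1]⟩
  have hR_next : ∀ v, ∃ w, R v w := by
    intro v
    obtain ⟨w, hw, hadj⟩ := hout (ℓ v) v (hℓ v)
    exact ⟨w, hadj, hℓ_eq w _ hw⟩
  choose f hf using hR_next
  -- a periodic point of f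
  obtain ⟨v0, -⟩ := hne 0
  have hper : ∃ p, 0 < p ∧ ∃ x, f^[p] x = x := by
    obtain ⟨a, b, hab, heq⟩ := Finite.exists_ne_map_eq_of_infinite (fun m : ℕ => f^[m] v0)
    rcases Nat.lt_or_ge a b with h | h
    · exact ⟨b - a, by omega, f^[a] v0, by
        rw [← Function.iterate_add_apply, Nat.sub_add_cancel h.le]; exact heq.symm⟩
    · have h' : b < a := lt_of_le_of_ne h (Ne.symm hab)
      exact ⟨a - b, by omega, f^[b] v0, by
        rw [← Function.iterate_add_apply, Nat.sub_add_cancel h'.le]; exact heq⟩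
  obtain ⟨p0, hp00, x, hx0⟩ := hper
  -- minimal period at x
  have hQ : ∃ m, 0 < m ∧ f^[m] x = x := ⟨p0, hp00, hx0⟩
  set p : ℕ := Nat.find hQ with hpdef
  obtain ⟨hp_pos, hx⟩ : 0 < p ∧ f^[p] x = x := Nat.find_spec hQ
  have hpmin : ∀ m, m < p → ¬ (0 < m ∧ f^[m] x = x) := fun m hm => Nat.find_min hQ hm
  haveI : NeZero p := ⟨hp_pos.ne'⟩
  have hmod : ∀ t : ℕ, f^[t] x = f^[t % p] x := by
    intro t
    conv_lhs => rw [← Nat.mod_add_div t p]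
    rw [Function.iterate_add_apply]
    congr 1
    rw [Function.iterate_mul]
    exact Function.iterate_fixed hx _
  set g0 : ZMod p → V := fun k => f^[k.val] x with hg0def
  have g0succ : ∀ k : ZMod p, g0 (k + 1) = f (g0 k) := by
    intro k
    have hk : ((k.val : ℕ) : ZMod p) = k := by rw [ZMod.natCast_val, ZMod.cast_id]
    have h1 : k + 1 = ((k.val + 1 : ℕ) : ZMod p) := by rw [Nat.cast_add, Nat.cast_one, hk]
    rw [h1]
    show f^[(((k.val + 1 : ℕ) : ZMod p)).val] x = f (f^[k.val] x)
    rw [ZMod.val_natCast, ← hmod, Function.iterate_succ_apply']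
  have g0inj : Function.Injective g0 := by
    have key2 : ∀ s t : ℕ, s ≤ t → t < p → f^[s] x = f^[t] x → s = t := by
      intro s t hst htp he
      by_contra hne'
      have h1 : f^[p - t + s] x = x := by
        rw [Function.iterate_add_apply, he, ← Function.iterate_add_apply,
          Nat.sub_add_cancel htp.le, hx]
      exact hpmin (p - t + s) (by omega) ⟨by omega, h1⟩
    intro i j hij
    apply ZMod.val_injective
    rcases le_total i.val j.val with h | h
    · exact key2 _ _ h (ZMod.val_lt j) hij
    · exact (key2 _ _ h (ZMod.val_lt i) hij.symm).symm
  -- the minimal directed cycle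
  have hPex : ∃ m : ℕ, 0 < m ∧ ∃ g : ZMod m → V,
      Function.Injective g ∧ ∀ k, R (g k) (g (k + 1)) :=
    ⟨p, hp_pos, g0, g0inj, fun k => by rw [g0succ]; exact hf (g0 k)⟩
  set n : ℕ := Nat.find hPex with hndef
  obtain ⟨hn_pos, g, ginj, gedge⟩ : 0 < n ∧ ∃ g : ZMod n → V,
      Function.Injective g ∧ ∀ k, R (g k) (g (k + 1)) := Nat.find_spec hPex
  have hnmin : ∀ m, m < n → ¬ (0 < m ∧ ∃ g : ZMod m → V,
      Function.Injective g ∧ ∀ k, R (g k) (g (k + 1))) := fun m hm => Nat.find_min hPex hm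
  haveI : NeZero n := ⟨hn_pos.ne'⟩
  -- length divisible by 3
  have hstep : ∀ t : ℕ, ℓ (g ((t : ZMod n))) = ℓ (g 0) + (t : ZMod 3) := by
    intro t
    induction t with
    | zero => simp
    | succ t ih =>
      have h1 : ((t + 1 : ℕ) : ZMod n) = (t : ZMod n) + 1 := by push_cast; ring
      rw [h1, (gedge _).2, ih]
      push_cast; ring
  have hdvd3 : 3 ∣ n := by
    have h2 := hstep n
    rw [ZMod.natCast_self] at h2
    have h0 : (n : ZMod 3) = 0 := by
      have := left_eq_add.mp h2
      exact this
    exact (ZMod.natCast_eq_zero_iff n 3).mp h0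
  -- the minimal cycle is induced: any R-edge between cycle vertices is a cycle edge
  have key : ∀ a b : ZMod n, R (g a) (g b) → b = a + 1 := by
    intro a b hRab
    by_contra hne1
    have hab : a ≠ b := by rintro rfl; exact hRab.1.ne rfl
    have hsub : a - b ≠ 0 := sub_ne_zero.mpr hab
    set d : ℕ := (a - b).val with hd
    have hd1 : 1 ≤ d := ZMod.val_pos.mpr hsub
    have hdn : d < n := ZMod.val_lt _
    have hdcast : ((d : ℕ) : ZMod n) = a - b := by rw [hd, ZMod.natCast_val, ZMod.cast_id]
    have hdne : d ≠ n - 1 := by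
      intro h
      apply hne1
      have h3 : ((n - 1 : ℕ) : ZMod n) = -1 := by
        rw [Nat.cast_sub (by omega : 1 ≤ n), ZMod.natCast_self]; push_cast; ring
      have h2 : a - b = -1 := by rw [← hdcast, h, h3]
      linear_combination -h2
    set m : ℕ := d + 1 with hmdef
    have hm2 : 2 ≤ m := by omega
    have hmn : m < n := by omega
    haveI : NeZero m := ⟨by omega⟩
    haveI : Fact (1 < m) := ⟨by omega⟩
    apply hnmin m hmn
    refine ⟨by omega, fun k => g (b + ((k.val : ℕ) : ZMod n)), ?_, ?_⟩
    · intro k1 k2 hk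
      have h4 := add_left_cancel (ginj hk)
      have h5 : k1.val = k2.val := by
        have e1 : (((k1.val : ℕ) : ZMod n)).val = k1.val :=
          ZMod.val_cast_of_lt (lt_of_lt_of_le (ZMod.val_lt k1) hmn.le)
        have e2 : (((k2.val : ℕ) : ZMod n)).val = k2.val :=
          ZMod.val_cast_of_lt (lt_of_lt_of_le (ZMod.val_lt k2) hmn.le)
        rw [← e1, ← e2, h4]
      exact ZMod.val_injective m h5
    · intro k
      have hkv : (k + 1).val = (k.val + 1) % m := by
        rw [ZMod.val_add, ZMod.val_one]
      by_cases hc : k.val + 1 < m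
      · have h6 : (k + 1).val = k.val + 1 := by rw [hkv, Nat.mod_eq_of_lt hc]
        show R (g (b + ((k.val : ℕ) : ZMod n))) (g (b + (((k + 1).val : ℕ) : ZMod n)))
        have h7 : b + (((k + 1).val : ℕ) : ZMod n) = b + ((k.val : ℕ) : ZMod n) + 1 := by
          rw [h6]; push_cast; ring
        rw [h7]
        exact gedge _
      · have hce : k.val + 1 = m := by have := ZMod.val_lt k; omega
        show R (g (b + ((k.val : ℕ) : ZMod n))) (g (b + (((k + 1).val : ℕ) : ZMod n)))
        have h8 : b + ((k.val : ℕ) : ZMod n) = a := by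
          have hkd : k.val = d := by omega
          rw [hkd, hdcast]; ring
        have h9 : b + (((k + 1).val : ℕ) : ZMod n) = b := by
          have : (k + 1).val = 0 := by rw [hkv, hce, Nat.mod_self]
          rw [this]; simp
        rw [h8, h9]
        exact hRab
  -- conclusion
  refine ⟨n, hdvd3, Nat.le_of_dvd hn_pos hdvd3, g, ginj, ?_⟩
  intro i j
  constructor
  · intro hadj
    rcases hR_or _ _ hadj with h | h
    · exact Or.inl (key i j h)
    · exact Or.inr (key j i h)
  · rintro (h | h)
    · rw [h]; exact (gedge i).1
    · rw [h]; exact ((gedge j).1).symm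
end
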